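/- arXiv:2310.09992 — 4 statements merged into one kernel-verified Lean document; each statement's English description precedes it below -/
import Mathlib

section
/- Let q be a positive real number and G₀, G₁, G₂ complex numbers each of absolute value √q. For ζ = e^{2πi/3} and T_j := Σ_{i=0}^{2} ζ^{ji} G_i (j ∈ ℤ), one has T_{i+1}·T_{i+2} − T_i² = −(3 G₀G₁G₂ / q) · conj(T_i) for every i ∈ {0,1,2} (indices mod 3). -/
theorem stmt0 (q : ℝ) (hq : 0 < q) (G₀ G₁ G₂ : ℂ)
    (h0 : ‖G₀‖ = Real.sqrt q) (h1 : ‖G₁‖ = Real.sqrt q)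
    (h2 : ‖G₂‖ = Real.sqrt q)
    (ζ : ℂ) (hζ : ζ = Complex.exp (2 * Real.pi * Complex.I / 3))
    (T : ℤ → ℂ) (hT : ∀ j : ℤ, T j = G₀ + ζ ^ j * G₁ + ζ ^ (2 * j) * G₂)
    (i : ℤ) :
    T (i + 1) * T (i + 2) - (T i) ^ 2
      = -(3 * G₀ * G₁ * G₂ / (q : ℂ)) * (starRingEnd ℂ) (T i) := by
  have hq0 : (q : ℂ) ≠ 0 := by exact_mod_cast hq.ne'
  have hζ0 : ζ ≠ 0 := by rw [hζ]; exact Complex.exp_ne_zero _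
  have hζ3 : ζ ^ 3 = 1 := by
    rw [hζ, ← Complex.exp_nat_mul]
    rw [show ((3 : ℕ) : ℂ) * (2 * Real.pi * Complex.I / 3) = 2 * Real.pi * Complex.I by
      push_cast; ring]
    exact Complex.exp_two_pi_mul_I
  have hζne : ζ ≠ 1 := by
    rw [hζ]
    exact (Complex.isPrimitiveRoot_exp 3 (by norm_num)).ne_one (by norm_num)
  have hsum : ζ ^ 2 + ζ + 1 = 0 := by
    have h : (ζ - 1) * (ζ ^ 2 + ζ + 1) = 0 := by linear_combination hζ3
    exact (mul_eq_zero.mp h).resolve_left (sub_ne_zero.mpr hζne)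
  have habsζ : ‖ζ‖ = 1 := by
    rw [hζ, Complex.norm_exp]
    norm_num [Complex.div_re, Complex.mul_I_re]
  have hcζ : (starRingEnd ℂ) ζ = ζ ^ 2 := by
    have h1' : ζ * (starRingEnd ℂ) ζ = 1 := by
      rw [Complex.mul_conj, Complex.normSq_eq_norm_sq, habsζ]; norm_num
    have h2' : ζ * ζ ^ 2 = 1 := by rw [← pow_succ']; exact hζ3
    exact mul_left_cancel₀ hζ0 (h1'.trans h2'.symm)
  set a := ζ ^ i with ha
  have ha0 : a ≠ 0 := zpow_ne_zero _ hζ0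
  have ha3 : a ^ 3 = 1 := by
    rw [ha, ← zpow_natCast (ζ ^ i) 3, ← zpow_mul, mul_comm, zpow_mul, zpow_natCast, hζ3,
      one_zpow]
  have h2z : ζ ^ (2 : ℤ) = ζ ^ (2 : ℕ) := zpow_natCast ζ 2
  have hai : ζ ^ (2 * i) = a ^ 2 := by rw [two_mul, zpow_add₀ hζ0, ha, sq]
  have e1 : ζ ^ (i + 1) = a * ζ := by rw [zpow_add₀ hζ0, zpow_one, ha]
  have e2 : ζ ^ (2 * (i + 1)) = a ^ 2 * ζ ^ 2 := by
    rw [show 2 * (i + 1) = 2 * i + 2 by ring, zpow_add₀ hζ0, hai, h2z]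
  have e3 : ζ ^ (i + 2) = a * ζ ^ 2 := by rw [zpow_add₀ hζ0, h2z, ha]
  have e4 : ζ ^ (2 * (i + 2)) = a ^ 2 * ζ := by
    rw [show 2 * (i + 2) = 2 * i + 3 + 1 by ring, zpow_add₀ hζ0, zpow_add₀ hζ0, hai,
      show (3 : ℤ) = ((3 : ℕ) : ℤ) by norm_num, zpow_natCast, hζ3, mul_one, zpow_one]
  have habsa : ‖a‖ = 1 := by rw [ha, norm_zpow, habsζ, one_zpow]
  have hca : (starRingEnd ℂ) a = a ^ 2 := by
    have h1' : a * (starRingEnd ℂ) a = 1 := by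
      rw [Complex.mul_conj, Complex.normSq_eq_norm_sq, habsa]; norm_num
    have h2' : a * a ^ 2 = 1 := by rw [← pow_succ']; exact ha3
    exact mul_left_cancel₀ ha0 (h1'.trans h2'.symm)
  have hca2 : (starRingEnd ℂ) (a ^ 2) = a := by
    rw [map_pow, hca, ← pow_mul, show 2 * 2 = 3 + 1 by norm_num, pow_succ, ha3, one_mul]
  -- nonvanishing of the G's
  have hs : Real.sqrt q ≠ 0 := by positivity
  have hG0 : G₀ ≠ 0 := fun h => hs (by rw [← h0, h, norm_zero])
  have hG1 : G₁ ≠ 0 := fun h => hs (by rw [← h1, h, norm_zero])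
  have hG2 : G₂ ≠ 0 := fun h => hs (by rw [← h2, h, norm_zero])
  -- conjugates of the G's
  have cG : ∀ (G : ℂ), ‖G‖ = Real.sqrt q → G ≠ 0 →
      (starRingEnd ℂ) G = (q : ℂ) / G := by
    intro G hG hG0'
    have : G * (starRingEnd ℂ) G = (q : ℂ) := by
      rw [Complex.mul_conj, Complex.normSq_eq_norm_sq, hG, Real.sq_sqrt hq.le]
    field_simp
    linear_combination this
  have c0 := cG G₀ h0 hG0
  have c1 := cG G₁ h1 hG1
  have c2 := cG G₂ h2 hG2
  rw [hT (i + 1), hT (i + 2), hT i, e1, e2, e3, e4, hai, ← ha, map_add, map_add, map_mul,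
    map_mul, hca, hca2, c0, c1, c2]
  field_simp
  linear_combination (norm := ring_nf)
    ((a ^ 2 * G₁ ^ 2 * (ζ - 1) + a ^ 4 * G₂ ^ 2 * (ζ - 1) +
      a * G₀ * G₁ + a ^ 2 * G₀ * G₂ + a ^ 3 * G₁ * G₂ * (1 + ζ * (ζ - 1)))) * hsum +
    ((-3 * G₁ * G₂)) * ha3
end

section
/- Let G₀, G₁, G₂ be nonzero complex numbers of equal absolute value √q (q > 0) and set T_j := G₀ + ζ^j G₁ + ζ^{2j} G₂ where ζ = e^{2πi/3}. Then for each i ∈ {0,1,2}, T_{i+1}T_{i+2} − T_i² = 0 if and only if T_i = 0 (indices mod 3). -/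
theorem stmt1 (q : ℝ) (hq : 0 < q) (G₀ G₁ G₂ : ℂ)
    (hG0 : G₀ ≠ 0) (hG1 : G₁ ≠ 0) (hG2 : G₂ ≠ 0)
    (h0 : ‖G₀‖ = Real.sqrt q) (h1 : ‖G₁‖ = Real.sqrt q)
    (h2 : ‖G₂‖ = Real.sqrt q)
    (ζ : ℂ) (hζ : ζ = Complex.exp (2 * Real.pi * Complex.I / 3))
    (T : ℤ → ℂ) (hT : ∀ j : ℤ, T j = G₀ + ζ ^ j * G₁ + ζ ^ (2 * j) * G₂)
    (i : ℤ) :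
    T (i + 1) * T (i + 2) - (T i) ^ 2 = 0 ↔ T i = 0 := by
  have hζ0 : ζ ≠ 0 := by rw [hζ]; exact Complex.exp_ne_zero _
  have hprim : IsPrimitiveRoot ζ 3 := by
    rw [hζ]
    have h := Complex.isPrimitiveRoot_exp 3 (by norm_num)
    norm_num at h
    exact h
  have hz3 : ζ ^ 3 = 1 := hprim.pow_eq_one
  have hζ1 : ζ ≠ 1 := hprim.ne_one (by norm_num)
  have hs : ζ ^ 2 + ζ + 1 = 0 := by
    have h : (ζ - 1) * (ζ ^ 2 + ζ + 1) = 0 := by linear_combination hz3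
    rcases mul_eq_zero.mp h with h' | h'
    · exact absurd (sub_eq_zero.mp h') hζ1
    · exact h'
  have habs : ‖ζ‖ = 1 := by
    have h := congrArg (‖·‖) hz3
    simp only [norm_pow, norm_one] at h
    nlinarith [norm_nonneg ζ, sq_nonneg (‖ζ‖ - 1),
      sq_nonneg (‖ζ‖ + 1)]
  set a : ℂ := ζ ^ i with ha
  have ha0 : a ≠ 0 := zpow_ne_zero _ hζ0
  have ha3 : a ^ 3 = 1 := by
    have h : a ^ 3 = (ζ ^ (3 : ℕ)) ^ i := by
      rw [ha, ← zpow_natCast (ζ ^ i) 3, ← zpow_mul, mul_comm, zpow_mul, zpow_natCast]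
    rw [h, hz3, one_zpow]
  have habsa : ‖a‖ = 1 := by rw [ha, norm_zpow, habs, one_zpow]
  have hca : (starRingEnd ℂ) a = a ^ 2 := by
    rw [← Complex.inv_eq_conj habsa]
    field_simp
    linear_combination -ha3
  have hc0 : G₀ * (starRingEnd ℂ) G₀ = (q : ℂ) := by
    rw [Complex.mul_conj, ← Complex.sq_norm, h0, Real.sq_sqrt hq.le]
  have hc1 : G₁ * (starRingEnd ℂ) G₁ = (q : ℂ) := by
    rw [Complex.mul_conj, ← Complex.sq_norm, h1, Real.sq_sqrt hq.le]
  have hc2 : G₂ * (starRingEnd ℂ) G₂ = (q : ℂ) := by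
    rw [Complex.mul_conj, ← Complex.sq_norm, h2, Real.sq_sqrt hq.le]
  have h2i : ζ ^ (2 * i) = a ^ 2 := by
    rw [two_mul, zpow_add₀ hζ0, sq]
  have hTi : T i = G₀ + a * G₁ + a ^ 2 * G₂ := by
    rw [hT i, h2i, ha]
  have hz2 : ζ ^ (2 : ℤ) = ζ ^ 2 := by
    rw [show (2 : ℤ) = ((2 : ℕ) : ℤ) by norm_num, zpow_natCast]
  have hz4 : ζ ^ (4 : ℤ) = ζ ^ 4 := by
    rw [show (4 : ℤ) = ((4 : ℕ) : ℤ) by norm_num, zpow_natCast]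
  have hTi1 : T (i + 1) = G₀ + a * ζ * G₁ + a ^ 2 * ζ ^ 2 * G₂ := by
    rw [hT (i + 1), show 2 * (i + 1) = 2 * i + 2 by ring, zpow_add₀ hζ0 (2 * i) 2, h2i,
      zpow_add₀ hζ0 i 1, zpow_one, hz2, ha]
  have hTi2 : T (i + 2) = G₀ + a * ζ ^ 2 * G₁ + a ^ 2 * ζ ^ 4 * G₂ := by
    rw [hT (i + 2), show 2 * (i + 2) = 2 * i + 4 by ring, zpow_add₀ hζ0 (2 * i) 4, h2i,
      zpow_add₀ hζ0 i 2, hz2, hz4, ha]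
  have hCT : (starRingEnd ℂ) (T i) =
      (starRingEnd ℂ) G₀ + a ^ 2 * (starRingEnd ℂ) G₁ + a ^ 4 * (starRingEnd ℂ) G₂ := by
    rw [hTi]
    simp only [map_add, map_mul, map_pow, hca]
    ring
  have key2 : (q : ℂ) * (T (i + 1) * T (i + 2) - T i ^ 2) =
      (-3 * G₀ * G₁ * G₂) * (starRingEnd ℂ) (T i) := by
    rw [hCT, hTi, hTi1, hTi2]
    linear_combination
      (3 * G₀ * G₁ * G₂ * ((starRingEnd ℂ) G₂) * a + G₁ * G₂ * ζ ^ 5 * (q : ℂ)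
        + G₁ * G₂ * ζ ^ 4 * (q : ℂ) - 2 * G₁ * G₂ * (q : ℂ)
        + G₂ ^ 2 * a * ζ ^ 6 * (q : ℂ) - G₂ ^ 2 * a * (q : ℂ)) * ha3
      + (G₀ * G₁ * a * (q : ℂ) + G₀ * G₂ * a ^ 2 * ζ ^ 2 * (q : ℂ)
        - G₀ * G₂ * a ^ 2 * ζ * (q : ℂ) + G₀ * G₂ * a ^ 2 * (q : ℂ)
        + G₁ ^ 2 * a ^ 2 * ζ * (q : ℂ) - G₁ ^ 2 * a ^ 2 * (q : ℂ)
        + G₁ * G₂ * ζ ^ 3 * (q : ℂ) - G₁ * G₂ * ζ * (q : ℂ) + G₁ * G₂ * (q : ℂ)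
        + G₂ ^ 2 * a * ζ ^ 4 * (q : ℂ) - G₂ ^ 2 * a * ζ ^ 3 * (q : ℂ)
        + G₂ ^ 2 * a * ζ * (q : ℂ) - G₂ ^ 2 * a * (q : ℂ)) * hs
      + (3 * G₁ * G₂) * hc0 + (3 * G₀ * G₂ * a ^ 2) * hc1 + (3 * G₀ * G₁ * a) * hc2
  have hq0 : (q : ℂ) ≠ 0 := by exact_mod_cast hq.ne'
  constructor
  · intro h
    rw [h, mul_zero] at key2
    have hG : (-3 * G₀ * G₁ * G₂ : ℂ) ≠ 0 := by
      simp [hG0, hG1, hG2]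
    have hct0 : (starRingEnd ℂ) (T i) = 0 := by
      rcases mul_eq_zero.mp key2.symm with h' | h'
      · exact absurd h' hG
      · exact h'
    have := congrArg (starRingEnd ℂ) hct0
    simpa using this
  · intro h
    rw [h]
    rw [h, map_zero, mul_zero] at key2
    rcases mul_eq_zero.mp key2 with h' | h'
    · exact absurd h' hq0
    · exact h'
end

section
/- Let G₀, G₁, G₂ be complex numbers each of absolute value √q (q > 0), ζ = e^{2πi/3}, and T_j := G₀ + ζ^j G₁ + ζ^{2j} G₂. Then the 3×3 matrix M with rows (T₀,T₁,T₂), (T₁,T₂,T₀), (T₂,T₀,T₁) has all its minors (of all sizes 1, 2, 3) nonzero if and only if T₀ ≠ 0, T₁ ≠ 0 and T₂ ≠ 0. -/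
set_option maxHeartbeats 1000000 in
theorem stmt3 (q : ℝ) (hq : 0 < q) (G₀ G₁ G₂ : ℂ)
    (h0 : ‖G₀‖ = Real.sqrt q) (h1 : ‖G₁‖ = Real.sqrt q)
    (h2 : ‖G₂‖ = Real.sqrt q)
    (ζ : ℂ) (hζ : ζ = Complex.exp (2 * Real.pi * Complex.I / 3))
    (T : ℕ → ℂ) (hT : ∀ j : ℕ, T j = G₀ + ζ ^ j * G₁ + ζ ^ (2 * j) * G₂)
    (M : Matrix (Fin 3) (Fin 3) ℂ)
    (hM : M = !![T 0, T 1, T 2; T 1, T 2, T 0; T 2, T 0, T 1]) :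
    (∀ (k : ℕ) (r c : Fin k → Fin 3), Function.Injective r → Function.Injective c →
        (M.submatrix r c).det ≠ 0)
      ↔ (T 0 ≠ 0 ∧ T 1 ≠ 0 ∧ T 2 ≠ 0) := by
  subst hM
  have hqC : (q : ℂ) ≠ 0 := by exact_mod_cast hq.ne'
  have hG0 : G₀ ≠ 0 := by
    intro h; rw [h, norm_zero] at h0
    exact absurd h0.symm (by positivity)
  have hG1 : G₁ ≠ 0 := by
    intro h; rw [h, norm_zero] at h1
    exact absurd h1.symm (by positivity)
  have hG2 : G₂ ≠ 0 := by
    intro h; rw [h, norm_zero] at h2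
    exact absurd h2.symm (by positivity)
  have c0 : G₀ * (starRingEnd ℂ) G₀ = (q : ℂ) := by
    rw [Complex.mul_conj, Complex.normSq_eq_norm_sq, h0, Real.sq_sqrt hq.le]
  have c1 : G₁ * (starRingEnd ℂ) G₁ = (q : ℂ) := by
    rw [Complex.mul_conj, Complex.normSq_eq_norm_sq, h1, Real.sq_sqrt hq.le]
  have c2 : G₂ * (starRingEnd ℂ) G₂ = (q : ℂ) := by
    rw [Complex.mul_conj, Complex.normSq_eq_norm_sq, h2, Real.sq_sqrt hq.le]
  have hprim : IsPrimitiveRoot ζ 3 := by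
    rw [hζ]
    simpa using Complex.isPrimitiveRoot_exp 3 (by norm_num)
  have hζ3 : ζ ^ 3 = 1 := hprim.pow_eq_one
  have hζ1 : ζ ≠ 1 := hprim.ne_one (by norm_num)
  have hζ0 : ζ ≠ 0 := by
    intro h; rw [h] at hζ3; norm_num at hζ3
  have hsum : ζ ^ 2 + ζ + 1 = 0 := by
    have h : (ζ - 1) * (ζ ^ 2 + ζ + 1) = 0 := by linear_combination hζ3
    exact (mul_eq_zero.mp h).resolve_left (sub_ne_zero.mpr hζ1)
  have hζconj : (starRingEnd ℂ) ζ = ζ ^ 2 := by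
    have habs : ‖ζ‖ = 1 := by
      rw [hζ, Complex.norm_exp]
      norm_num [Complex.div_re, Complex.mul_re]
    have hz1 : ζ * (starRingEnd ℂ) ζ = 1 := by
      rw [Complex.mul_conj, Complex.normSq_eq_norm_sq, habs]; norm_num
    have hz2 : ζ * ζ ^ 2 = 1 := by linear_combination hζ3
    exact mul_left_cancel₀ hζ0 (hz1.trans hz2.symm)
  set A0 := (starRingEnd ℂ) G₀ with hA0
  set A1 := (starRingEnd ℂ) G₁ with hA1
  set A2 := (starRingEnd ℂ) G₂ with hA2
  -- the three "S" quantities and their key conjugate identities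
  have hK0 : (G₀*G₁ + G₀*G₂ + G₁*G₂) * (A0*A1*A2) = (q:ℂ)^2 * (starRingEnd ℂ) (T 0) := by
    rw [hT 0]
    simp only [map_add, map_mul, map_pow, hζconj, ← hA0, ← hA1, ← hA2]
    linear_combination (G₁*A1*A2 + G₂*A1*A2)*c0 + ((q:ℂ)*A2 + G₂*A0*A2)*c1
      + ((q:ℂ)*A1 + (q:ℂ)*A0)*c2
  have hK1 : (ζ*G₀*G₁ + ζ^2*G₀*G₂ + G₁*G₂) * (A0*A1*A2)
      = (q:ℂ)^2 * (starRingEnd ℂ) (T 1) := by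
    rw [hT 1]
    simp only [map_add, map_mul, map_pow, hζconj, ← hA0, ← hA1, ← hA2]
    linear_combination (ζ*G₁*A1*A2 + ζ^2*G₂*A1*A2)*c0 + (ζ*(q:ℂ)*A2 + G₂*A0*A2)*c1
      + (ζ^2*(q:ℂ)*A1 + (q:ℂ)*A0)*c2 + (-(q:ℂ)^2*A2*ζ*(ζ-1))*hsum
  have hK2 : (ζ^2*G₀*G₁ + ζ*G₀*G₂ + G₁*G₂) * (A0*A1*A2)
      = (q:ℂ)^2 * (starRingEnd ℂ) (T 2) := by
    rw [hT 2]
    simp only [map_add, map_mul, map_pow, hζconj, ← hA0, ← hA1, ← hA2]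
    linear_combination (ζ^2*G₁*A1*A2 + ζ*G₂*A1*A2)*c0 + (ζ^2*(q:ℂ)*A2 + G₂*A0*A2)*c1
      + (ζ*(q:ℂ)*A1 + (q:ℂ)*A0)*c2
      + (-(q:ℂ)^2*A1*ζ*(ζ-1) - (q:ℂ)^2*A2*ζ^2*(ζ-1)*(ζ^3+1))*hsum
  have hprodA : A0*A1*A2 ≠ 0 := by
    simp only [hA0, hA1, hA2]
    exact mul_ne_zero (mul_ne_zero (by simpa using hG0) (by simpa using hG1)) (by simpa using hG2)
  constructor
  · intro H
    have key : ∀ i j : Fin 3,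
        (!![T 0, T 1, T 2; T 1, T 2, T 0; T 2, T 0, T 1] : Matrix (Fin 3) (Fin 3) ℂ) i j ≠ 0 := by
      intro i j
      have := H 1 ![i] ![j] (Function.injective_of_subsingleton _)
        (Function.injective_of_subsingleton _)
      rw [Matrix.det_fin_one] at this
      simpa using this
    refine ⟨?_, ?_, ?_⟩
    · simpa using key 0 0
    · simpa using key 0 1
    · simpa using key 0 2
  · rintro ⟨ht0, ht1, ht2⟩ k r c hr hc
    -- conj T i ≠ 0
    have hc0 : (starRingEnd ℂ) (T 0) ≠ 0 := by simpa using ht0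
    have hc1 : (starRingEnd ℂ) (T 1) ≠ 0 := by simpa using ht1
    have hc2 : (starRingEnd ℂ) (T 2) ≠ 0 := by simpa using ht2
    have hS0 : G₀*G₁ + G₀*G₂ + G₁*G₂ ≠ 0 := by
      intro h; rw [h, zero_mul] at hK0
      exact mul_ne_zero (pow_ne_zero 2 hqC) hc0 hK0.symm
    have hS1 : ζ*G₀*G₁ + ζ^2*G₀*G₂ + G₁*G₂ ≠ 0 := by
      intro h; rw [h, zero_mul] at hK1
      exact mul_ne_zero (pow_ne_zero 2 hqC) hc1 hK1.symm
    have hS2 : ζ^2*G₀*G₁ + ζ*G₀*G₂ + G₁*G₂ ≠ 0 := by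
      intro h; rw [h, zero_mul] at hK2
      exact mul_ne_zero (pow_ne_zero 2 hqC) hc2 hK2.symm
    have hD0 : T 1 * T 2 - T 0 * T 0 ≠ 0 := by
      intro h
      rw [hT 0, hT 1, hT 2] at h
      apply hS0
      linear_combination (-1/3 : ℂ) * h + ((1/3 : ℂ) * ((-1)*G₂^2 + (1)*G₁*G₂ + (-1)*G₁^2 + (1)*G₀*G₂ + (1)*G₀*G₁ + (1)*ζ*G₂^2 + (-1)*ζ*G₁*G₂ + (1)*ζ*G₁^2 + (-1)*ζ*G₀*G₂ + (1)*ζ^2*G₀*G₂ + (-1)*ζ^3*G₂^2 + (1)*ζ^3*G₁*G₂ + (1)*ζ^4*G₂^2)) * hsum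
    have hD1 : T 2 * T 0 - T 1 * T 1 ≠ 0 := by
      intro h
      rw [hT 0, hT 1, hT 2] at h
      apply hS1
      linear_combination (-1/3 : ℂ) * h + ((1/3 : ℂ) * ((3)*G₁*G₂ + (1)*G₀*G₂ + (1)*G₀*G₁ + (-3)*ζ*G₁*G₂ + (-1)*ζ*G₀*G₂ + (1)*ζ^2*G₁*G₂ + (1)*ζ^2*G₀*G₂)) * hsum
    have hD2 : T 0 * T 1 - T 2 * T 2 ≠ 0 := by
      intro h
      rw [hT 0, hT 1, hT 2] at h
      apply hS2
      linear_combination (-1/3 : ℂ) * h + ((1/3 : ℂ) * ((3)*G₁*G₂ + (1)*G₀*G₂ + (1)*G₀*G₁ + (-2)*ζ*G₁*G₂ + (1)*ζ*G₁^2 + (2)*ζ*G₀*G₂ + (1)*ζ^2*G₂^2 + (-1)*ζ^2*G₁^2 + (-2)*ζ^2*G₀*G₂ + (-1)*ζ^3*G₂^2 + (2)*ζ^3*G₁*G₂ + (-2)*ζ^4*G₁*G₂ + (1)*ζ^5*G₂^2 + (-1)*ζ^6*G₂^2)) * hsum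
    have hdet : (!![T 0, T 1, T 2; T 1, T 2, T 0; T 2, T 0, T 1] : Matrix (Fin 3) (Fin 3) ℂ).det
        = -27 * (G₀ * G₁ * G₂) := by
      rw [Matrix.det_fin_three]
      norm_num [Matrix.cons_val_one, Matrix.head_cons, Matrix.cons_val_zero,
        Matrix.cons_val_two, Matrix.tail_cons]
      rw [hT 0, hT 1, hT 2]
      linear_combination ((-1)*G₂^3 + (-3)*G₁*G₂^2 + (-3)*G₁^2*G₂ + (-1)*G₁^3 + (-3)*G₀*G₂^2 + (21)*G₀*G₁*G₂ + (-3)*G₀*G₁^2 + (1)*ζ*G₂^3 + (3)*ζ*G₁*G₂^2 + (3)*ζ*G₁^2*G₂ + (1)*ζ*G₁^3 + (3)*ζ*G₀*G₂^2 + (-18)*ζ*G₀*G₁*G₂ + (6)*ζ*G₀*G₁^2 + (3)*ζ^2*G₀*G₂^2 + (3)*ζ^2*G₀*G₁*G₂ + (-3)*ζ^2*G₀*G₁^2 + (-1)*ζ^3*G₂^3 + (-3)*ζ^3*G₁*G₂^2 + (1)*ζ^3*G₁^3 + (-6)*ζ^3*G₀*G₂^2 + (9)*ζ^3*G₀*G₁*G₂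 + (1)*ζ^4*G₂^3 + (6)*ζ^4*G₁*G₂^2 + (-1)*ζ^4*G₁^3 + (3)*ζ^4*G₀*G₂^2 + (-6)*ζ^4*G₀*G₁*G₂ + (-3)*ζ^5*G₁*G₂^2 + (3)*ζ^5*G₁^2*G₂ + (3)*ζ^5*G₀*G₂^2 + (1)*ζ^6*G₂^3 + (-3)*ζ^6*G₁^2*G₂ + (-3)*ζ^6*G₀*G₂^2 + (-1)*ζ^7*G₂^3 + (3)*ζ^7*G₁*G₂^2 + (-3)*ζ^8*G₁*G₂^2 + (1)*ζ^9*G₂^3 + (-1)*ζ^10*G₂^3) * hsum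
    have hdetne : (!![T 0, T 1, T 2; T 1, T 2, T 0; T 2, T 0, T 1] : Matrix (Fin 3) (Fin 3) ℂ).det ≠ 0 := by
      rw [hdet]
      exact mul_ne_zero (by norm_num) (mul_ne_zero (mul_ne_zero hG0 hG1) hG2)
    have hk : k ≤ 3 := by
      have := Fintype.card_le_of_injective r hr
      simpa using this
    interval_cases k
    · rw [Matrix.det_fin_zero]; exact one_ne_zero
    · rw [Matrix.det_fin_one]
      simp only [Matrix.submatrix_apply]
      obtain ⟨a, ha⟩ : ∃ a, r 0 = a := ⟨_, rfl⟩
      obtain ⟨b, hb⟩ : ∃ b, c 0 = b := ⟨_, rfl⟩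
      rw [ha, hb]
      fin_cases a <;> fin_cases b <;>
        (norm_num [Matrix.cons_val_one, Matrix.head_cons, Matrix.cons_val_zero,
          Matrix.cons_val_two, Matrix.tail_cons]; assumption)
    · rw [Matrix.det_fin_two]
      simp only [Matrix.submatrix_apply]
      have hrr : r 0 ≠ r 1 := fun h => by simpa using hr h
      have hcc : c 0 ≠ c 1 := fun h => by simpa using hc h
      obtain ⟨a, ha⟩ : ∃ a, r 0 = a := ⟨_, rfl⟩
      obtain ⟨b, hb⟩ : ∃ b, r 1 = b := ⟨_, rfl⟩
      obtain ⟨d, hd⟩ : ∃ d, c 0 = d := ⟨_, rfl⟩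
      obtain ⟨e, he⟩ : ∃ e, c 1 = e := ⟨_, rfl⟩
      rw [ha, hb, hd, he]
      rw [ha, hb] at hrr
      rw [hd, he] at hcc
      fin_cases a <;> fin_cases b <;> fin_cases d <;> fin_cases e <;>
        first
        | exact absurd rfl hrr
        | exact absurd rfl hcc
        | (norm_num [Matrix.cons_val_one, Matrix.head_cons, Matrix.cons_val_zero,
            Matrix.cons_val_two, Matrix.tail_cons]
           intro h
           first
          | exact hD0 (by linear_combination h)
          | exact hD0 (by linear_combination -h)
          | exact hD1 (by linear_combination h)
          | exact hD1 (by linear_combination -h)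
           | exact hD2 (by linear_combination h)
           | exact hD2 (by linear_combination -h))
    · have hrb := Finite.injective_iff_bijective.mp hr
      have hcb := Finite.injective_iff_bijective.mp hc
      have hre : (!![T 0, T 1, T 2; T 1, T 2, T 0; T 2, T 0, T 1] : Matrix (Fin 3) (Fin 3) ℂ).submatrix r c
          = ((!![T 0, T 1, T 2; T 1, T 2, T 0; T 2, T 0, T 1] : Matrix (Fin 3) (Fin 3) ℂ).submatrix
              id (Equiv.ofBijective c hcb)).submatrix (Equiv.ofBijective r hrb) id := by
        ext i j; rfl
      rw [hre, Matrix.det_permute, Matrix.det_permute']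
      refine mul_ne_zero (by simp) (mul_ne_zero (by simp) hdetne)
end

section
/- Let G₀, G₁, G₂ be complex numbers each of absolute value √q (q > 0), ζ = e^{2πi/3}, and T_j := G₀ + ζ^j G₁ + ζ^{2j} G₂. Then (T₀ ≠ 0 and T₁ ≠ 0 and T₂ ≠ 0) if and only if (T₀ ≠ 0 and G_i ≠ G_j for some i ≠ j). -/
open Complex

lemma zeta_props (ζ : ℂ) (hζ : ζ = Complex.exp (2 * Real.pi * Complex.I / 3)) :
    ζ ^ 3 = 1 ∧ 1 + ζ + ζ ^ 2 = 0 := by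
  have hprim : IsPrimitiveRoot ζ 3 := by
    rw [hζ]
    have := Complex.isPrimitiveRoot_exp 3 (by norm_num)
    convert this using 2
    norm_num
  have h3 : ζ ^ 3 = 1 := hprim.pow_eq_one
  have hne : ζ ≠ 1 := hprim.ne_one (by norm_num)
  refine ⟨h3, ?_⟩
  have h : (ζ - 1) * (1 + ζ + ζ ^ 2) = 0 := by linear_combination h3
  rcases mul_eq_zero.mp h with h | h
  · exact absurd (sub_eq_zero.mp h) hne
  · exact h

lemma key (q : ℝ) (hq : 0 < q) (ζ a b c : ℂ)
    (hz3 : ζ ^ 3 = 1) (hz : 1 + ζ + ζ ^ 2 = 0)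
    (ha : a * (starRingEnd ℂ) a = q) (hb : b * (starRingEnd ℂ) b = q)
    (hc : c * (starRingEnd ℂ) c = q) (hsum : a + b + c = 0) :
    (b = ζ * a ∧ c = ζ ^ 2 * a) ∨ (b = ζ ^ 2 * a ∧ c = ζ * a) := by
  have hq0 : (q : ℂ) ≠ 0 := by exact_mod_cast hq.ne'
  have ha0 : a ≠ 0 := by rintro rfl; simp at ha; exact hq0 ha.symm
  have hb0 : b ≠ 0 := by rintro rfl; simp at hb; exact hq0 hb.symm
  have hc0 : c ≠ 0 := by rintro rfl; simp at hc; exact hq0 hc.symm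
  have hconj : (starRingEnd ℂ) a + (starRingEnd ℂ) b + (starRingEnd ℂ) c = 0 := by
    have := congrArg (starRingEnd ℂ) hsum
    simpa using this
  have he2 : b * c + a * c + a * b = 0 := by
    have h : (q : ℂ) * (b * c + a * c + a * b) = 0 := by
      linear_combination (a * b * c) * hconj - (b * c) * ha - (a * c) * hb - (a * b) * hc
    exact (mul_eq_zero.mp h).resolve_left hq0
  have hcval : c = -(a + b) := by linear_combination hsum
  have hquad : a ^ 2 + a * b + b ^ 2 = 0 := by
    rw [hcval] at he2; linear_combination -he2
  have hfact : (b - ζ * a) * (b - ζ ^ 2 * a) = 0 := by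
    linear_combination hquad - a * b * hz + a ^ 2 * hz3
  rcases mul_eq_zero.mp hfact with h | h
  · left
    have hb' : b = ζ * a := by linear_combination h
    exact ⟨hb', by rw [hcval, hb']; linear_combination -a * hz⟩
  · right
    have hb' : b = ζ ^ 2 * a := by linear_combination h
    exact ⟨hb', by rw [hcval, hb']; linear_combination -a * hz⟩

theorem stmt4 (q : ℝ) (hq : 0 < q) (G : Fin 3 → ℂ)
    (hG : ∀ i, ‖G i‖ = Real.sqrt q)
    (ζ : ℂ) (hζ : ζ = Complex.exp (2 * Real.pi * Complex.I / 3))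
    (T : ℕ → ℂ) (hT : ∀ j : ℕ, T j = G 0 + ζ ^ j * G 1 + ζ ^ (2 * j) * G 2) :
    (T 0 ≠ 0 ∧ T 1 ≠ 0 ∧ T 2 ≠ 0) ↔ (T 0 ≠ 0 ∧ ∃ i j : Fin 3, i ≠ j ∧ G i ≠ G j) := by
  obtain ⟨hz3, hz⟩ := zeta_props ζ hζ
  have hmc : ∀ i, G i * (starRingEnd ℂ) (G i) = (q : ℂ) := by
    intro i
    rw [Complex.mul_conj]
    norm_cast
    rw [Complex.normSq_eq_norm_sq, hG i, Real.sq_sqrt hq.le]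
  have habsz : ‖ζ‖ = 1 := by
    have h := congrArg (‖·‖) hz3
    simp only [norm_pow, norm_one] at h
    nlinarith [norm_nonneg ζ, sq_nonneg (‖ζ‖ - 1), sq_nonneg (‖ζ‖ + 1)]
  have hzc : ζ * (starRingEnd ℂ) ζ = 1 := by
    rw [Complex.mul_conj]
    norm_cast
    rw [Complex.normSq_eq_norm_sq, habsz]; norm_num
  have hz0 : ζ ≠ 0 := by intro h; rw [h] at hz3; simp at hz3
  -- conj products for ζ*G and ζ^2*G
  have hb1 : ∀ i, (ζ * G i) * (starRingEnd ℂ) (ζ * G i) = (q : ℂ) := by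
    intro i; simp only [map_mul]
    calc ζ * G i * ((starRingEnd ℂ) ζ * (starRingEnd ℂ) (G i))
        = (ζ * (starRingEnd ℂ) ζ) * (G i * (starRingEnd ℂ) (G i)) := by ring
      _ = (q : ℂ) := by rw [hzc, hmc]; ring
  have hb2 : ∀ i, (ζ ^ 2 * G i) * (starRingEnd ℂ) (ζ ^ 2 * G i) = (q : ℂ) := by
    intro i; simp only [map_mul, map_pow]
    calc ζ ^ 2 * G i * ((starRingEnd ℂ) ζ ^ 2 * (starRingEnd ℂ) (G i))
        = (ζ * (starRingEnd ℂ) ζ) ^ 2 * (G i * (starRingEnd ℂ) (G i)) := by ring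
      _ = (q : ℂ) := by rw [hzc, hmc]; ring
  have hT0 : T 0 = G 0 + G 1 + G 2 := by simp [hT 0]
  constructor
  · rintro ⟨h0, h1, h2⟩
    refine ⟨h0, ?_⟩
    by_contra hcon
    push_neg at hcon
    have e1 : G 1 = G 0 := hcon 1 0 (by decide)
    have e2 : G 2 = G 0 := hcon 2 0 (by decide)
    apply h1
    rw [hT 1, e1, e2]
    linear_combination (G 0) * hz
  · rintro ⟨h0, i, j, hij, hGij⟩
    have alleq : G 1 = G 0 → G 2 = G 0 → False := by
      intro e1 e2
      apply hGij
      fin_cases i <;> fin_cases j <;> simp_all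
    refine ⟨h0, ?_, ?_⟩
    · intro hT1
      rw [hT 1] at hT1
      have hsum : G 0 + ζ * G 1 + ζ ^ 2 * G 2 = 0 := by
        rw [← hT1]; ring_nf
      rcases key q hq ζ (G 0) (ζ * G 1) (ζ ^ 2 * G 2) hz3 hz (hmc 0) (hb1 1) (hb2 2) hsum with
        ⟨ha, hb⟩ | ⟨ha, hb⟩
      · exact alleq (mul_left_cancel₀ hz0 ha)
          (by have : ζ ^ 2 ≠ 0 := pow_ne_zero 2 hz0; exact mul_left_cancel₀ this hb)
      · -- G1 = ζ G0, G2 = ζ^2 G0 → T0 = 0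
        apply h0
        have e1 : G 1 = ζ * G 0 := by
          have := mul_left_cancel₀ hz0 (by linear_combination ha : ζ * G 1 = ζ * (ζ * G 0))
          exact this
        have e2 : G 2 = ζ ^ 2 * G 0 := by
          -- ζ^2 * G 2 = ζ * G 0, multiply by ζ: G 2 = ζ^2 G 0 using ζ^3=1
          have h3 : ζ ^ 3 * G 2 = ζ ^ 2 * G 0 := by linear_combination ζ * hb
          rw [hz3] at h3; linear_combination h3
        rw [hT0, e1, e2]
        linear_combination (G 0) * hz
    · intro hT2
      rw [hT 2] at hT2
      have hsum : G 0 + ζ ^ 2 * G 1 + ζ * G 2 = 0 := by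
        have h4 : ζ ^ (2 * 2) = ζ := by
          have : ζ ^ (2 * 2) = ζ ^ 3 * ζ := by ring
          rw [this, hz3]; ring
        rw [← hT2, h4]
        try ring
      rcases key q hq ζ (G 0) (ζ ^ 2 * G 1) (ζ * G 2) hz3 hz (hmc 0) (hb2 1) (hb1 2) hsum with
        ⟨ha, hb⟩ | ⟨ha, hb⟩
      · -- ζ^2 G1 = ζ G0, ζ G2 = ζ^2 G0 → G1 = ζ^2 G0, G2 = ζ G0 → T0=0
        apply h0
        have e1 : G 1 = ζ ^ 2 * G 0 := by
          have h3 : ζ ^ 3 * G 1 = ζ ^ 2 * G 0 := by linear_combination ζ * ha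
          rw [hz3] at h3; linear_combination h3
        have e2 : G 2 = ζ * G 0 :=
          mul_left_cancel₀ hz0 (by linear_combination hb : ζ * G 2 = ζ * (ζ * G 0))
        rw [hT0, e1, e2]
        linear_combination (G 0) * hz
      · have e1 : G 1 = G 0 := by
          have : ζ ^ 2 ≠ 0 := pow_ne_zero 2 hz0
          exact mul_left_cancel₀ this ha
        have e2 : G 2 = G 0 := mul_left_cancel₀ hz0 hb
        exact alleq e1 e2
end
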